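/- Let R ⊆ ω₁ be stationary. The club shooting forcing P_R, whose conditions are countable functions p : α+1 → R (α < ω₁) with closed range, ordered by end-extension, is ω-distributive: for every condition p and every P_R-name ẋ for an element of 2^ω there is q ≤ p and a ground-model real x with q ⊩ ẋ = x. -/

import Mathlib

/-- The first uncountable ordinal `ω₁`. -/
noncomputable def omega1 : Ordinal := (Cardinal.aleph 1).ord

/-- `C` is a club (closed unbounded) subset of `ω₁`. -/
def IsClubOmega1 (C : Set Ordinal) : Prop :=
  C ⊆ Set.Iio omega1 ∧
  (∀ α < omega1, ∃ β ∈ C, α < β) ∧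
  (∀ δ < omega1, 0 < δ → (∀ β < δ, ∃ γ ∈ C, β < γ ∧ γ < δ) → δ ∈ C)

/-- `S` is a stationary subset of `ω₁`. -/
def IsStationaryOmega1 (S : Set Ordinal) : Prop :=
  S ⊆ Set.Iio omega1 ∧ ∀ C, IsClubOmega1 C → (S ∩ C).Nonempty

/-- A closed bounded nonempty subset of `ω₁` (the range of a countable function
`p : α + 1 → ω₁` with closed image). -/
def IsClosedBdd (c : Set Ordinal) : Prop :=
  c.Nonempty ∧ (∃ α < omega1, ∀ x ∈ c, x ≤ α) ∧
    ∀ δ, 0 < δ → (∀ β < δ, ∃ γ ∈ c, β < γ ∧ γ < δ) → δ ∈ c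

/-- A condition of the club shooting forcing `P_R`: a closed bounded nonempty
subset of `R`. -/
def IsCond (R : Set Ordinal) (c : Set Ordinal) : Prop := c ⊆ R ∧ IsClosedBdd c

/-- End-extension: `d ≤ c` iff `d ⊇ c` and all new points lie above `c`. -/
def CondLe (d c : Set Ordinal) : Prop :=
  c ⊆ d ∧ ∀ x ∈ d, x ∉ c → ∀ y ∈ c, y < x

-- auxiliary lemmas
lemma omega1_isLimit : Order.IsSuccLimit omega1 := Cardinal.isSuccLimit_ord (Cardinal.aleph0_le_aleph 1)

lemma omega1_pos : 0 < omega1 := omega1_isLimit.pos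

lemma add_one_lt_omega1 {α : Ordinal} (h : α < omega1) : α + 1 < omega1 := by
  rw [Ordinal.add_one_eq_succ]
  exact omega1_isLimit.succ_lt h

lemma iSup_nat_lt_omega1 (f : ℕ → Ordinal) (hf : ∀ n, f n < omega1) : iSup f < omega1 := by
  apply Ordinal.iSup_lt_ord_lift ?_ hf
  unfold omega1
  rw [Cardinal.isRegular_aleph_one.cof_eq]
  simp only [Cardinal.mk_nat, Cardinal.lift_aleph0]
  exact Cardinal.aleph0_lt_aleph_one

universe u

lemma countable_Iio_omega1 {α : Ordinal.{u}} (h : α < omega1) : (Set.Iio α).Countable := by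
  rw [Cardinal.countable_iff_lt_aleph_one, Ordinal.mk_Iio_ordinal]
  have h1 : Cardinal.lift.{u+1, u} (Cardinal.aleph.{u} 1) = Cardinal.aleph 1 := by
    rw [Cardinal.lift_aleph, Ordinal.lift_one]
  rw [← h1, Cardinal.lift_lt]
  exact Cardinal.lt_ord.mp h

lemma condLe_refl (c : Set Ordinal) : CondLe c c :=
  ⟨subset_rfl, fun _ hx hxc _ _ => absurd hx hxc⟩

lemma condLe_trans {a b c : Set Ordinal} (h1 : CondLe a b) (h2 : CondLe b c) : CondLe a c := by
  refine ⟨h2.1.trans h1.1, fun x hx hxc y hy => ?_⟩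
  by_cases hxb : x ∈ b
  · exact h2.2 x hxb hxc y hy
  · exact h1.2 x hx hxb y (h2.1 hy)

open Classical in
noncomputable def bnd (c : Set Ordinal) : Ordinal :=
  if h : ∃ α < omega1, ∀ x ∈ c, x ≤ α then h.choose else 0

lemma bnd_lt_omega1 (c : Set Ordinal) : bnd c < omega1 := by
  classical
  rw [bnd]
  split
  · next h => exact h.choose_spec.1
  · exact omega1_pos

lemma bnd_spec {c : Set Ordinal} (h : ∃ α < omega1, ∀ x ∈ c, x ≤ α) :
    ∀ x ∈ c, x ≤ bnd c := by
  classical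
  rw [bnd, dif_pos h]
  exact h.choose_spec.2

lemma isCond_insert {R c : Set Ordinal} {γ : Ordinal} (hc : IsCond R c) (hγR : γ ∈ R)
    (hγlt : γ < omega1) (htop : ∀ x ∈ c, x < γ) :
    IsCond R (insert γ c) ∧ CondLe (insert γ c) c := by
  constructor
  · refine ⟨?_, ⟨γ, Set.mem_insert _ _⟩, ⟨γ, hγlt, ?_⟩, ?_⟩
    · intro x hx
      rcases Set.mem_insert_iff.mp hx with rfl | hx
      · exact hγR
      · exact hc.1 hx
    · intro x hx
      rcases Set.mem_insert_iff.mp hx with rfl | hx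
      · exact le_rfl
      · exact (htop x hx).le
    · intro δ hδ happ
      rcases lt_trichotomy δ γ with hlt | rfl | hgt
      · have : ∀ β < δ, ∃ γ' ∈ c, β < γ' ∧ γ' < δ := by
          intro β hβ
          obtain ⟨γ', hγ', h1, h2⟩ := happ β hβ
          rcases Set.mem_insert_iff.mp hγ' with rfl | hγ'
          · exact absurd (h2.trans hlt) (lt_irrefl _)
          · exact ⟨γ', hγ', h1, h2⟩
        exact Set.mem_insert_of_mem _ (hc.2.2.2 δ hδ this)
      · exact Set.mem_insert _ _
      · obtain ⟨γ', hγ', h1, h2⟩ := happ γ hgt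
        rcases Set.mem_insert_iff.mp hγ' with rfl | hγ'
        · exact absurd h1 (lt_irrefl _)
        · exact absurd (htop γ' hγ') (not_lt.mpr h1.le)
  · refine ⟨Set.subset_insert _ _, fun x hx hxc y hy => ?_⟩
    rcases Set.mem_insert_iff.mp hx with rfl | hx
    · exact htop y hy
    · exact absurd hx hxc

section Main

variable (R : Set Ordinal) (ν : ℕ → Bool → Set (Set Ordinal))

open Classical in
noncomputable def Dfun
    (hdense : ∀ n, ∀ c, IsCond R c →
      ∃ d, IsCond R d ∧ CondLe d c ∧ (d ∈ ν n true ∨ d ∈ ν n false))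
    (c : Set Ordinal) (n : ℕ) : Set Ordinal :=
  if h : IsCond R c then (hdense n c h).choose else c

lemma Dfun_spec (hdense : ∀ n, ∀ c, IsCond R c →
      ∃ d, IsCond R d ∧ CondLe d c ∧ (d ∈ ν n true ∨ d ∈ ν n false))
    {c : Set Ordinal} (h : IsCond R c) (n : ℕ) :
    IsCond R (Dfun R ν hdense c n) ∧ CondLe (Dfun R ν hdense c n) c ∧
      (Dfun R ν hdense c n ∈ ν n true ∨ Dfun R ν hdense c n ∈ ν n false) := by
  classical
  rw [Dfun, dif_pos h]
  exact (hdense n c h).choose_spec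

end Main

/-- building a chain from a list of "generic" points (most recent first) -/
def build (D : Set Ordinal → ℕ → Set Ordinal) (p : Set Ordinal) : List Ordinal → Set Ordinal
  | [] => p
  | x :: l => insert x (D (build D p l) l.length)

/-- the bound function on lists -/
noncomputable def Bfn (D : Set Ordinal → ℕ → Set Ordinal) (p : Set Ordinal)
    (l : List Ordinal) : Ordinal :=
  bnd (D (build D p l) l.length)

lemma listSup_lt {B : List Ordinal.{u} → Ordinal.{u}} (hB : ∀ l, B l < omega1)
    {α : Ordinal.{u}} (hα : α < omega1) :
    ∃ β < omega1, ∀ l : List Ordinal, (∀ x ∈ l, x < α) → B l ≤ β := by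
  have hc : Countable (Set.Iio α) := (countable_Iio_omega1 hα).to_subtype
  have hne : Nonempty (List (Set.Iio α)) := ⟨[]⟩
  obtain ⟨g, hg⟩ := exists_surjective_nat (List (Set.Iio α))
  refine ⟨iSup (fun n => B ((g n).map Subtype.val)),
    iSup_nat_lt_omega1 _ (fun n => hB _), ?_⟩
  intro l hl
  set l' : List (Set.Iio α) := l.attach.map (fun x => ⟨x.1, hl _ x.2⟩) with hl'
  have hmap : l'.map Subtype.val = l := by
    rw [hl', List.map_map]
    simp
  obtain ⟨n, hn⟩ := hg l'
  have := Ordinal.le_iSup (fun n => B ((g n).map Subtype.val)) n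
  rwa [hn, hmap] at this

lemma foldr_max_le (l : List Ordinal) : ∀ x ∈ l, x ≤ l.foldr max 0 := by
  induction l with
  | nil => simp
  | cons y l ih =>
    intro x hx
    rcases List.mem_cons.mp hx with rfl | hx
    · exact le_max_left _ _
    · exact (ih x hx).trans (le_max_right _ _)

lemma foldr_max_lt {δ : Ordinal} (l : List Ordinal) (h0 : 0 < δ) (h : ∀ x ∈ l, x < δ) :
    l.foldr max 0 < δ := by
  induction l with
  | nil => simpa
  | cons y l ih =>
    simp only [List.foldr_cons]
    exact max_lt (h y (List.mem_cons_self)) (ih fun x hx => h x (List.mem_cons_of_mem _ hx))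

lemma list_bound {a : ℕ → Ordinal} (hm : Monotone a) :
    ∀ l : List Ordinal, (∀ x ∈ l, ∃ n, x < a n) → ∃ n, ∀ x ∈ l, x < a n := by
  intro l hl
  induction l with
  | nil => exact ⟨0, by simp⟩
  | cons y l ih =>
    obtain ⟨n1, hn1⟩ := hl y (List.mem_cons_self)
    obtain ⟨n2, hn2⟩ := ih fun x hx => hl x (List.mem_cons_of_mem _ hx)
    refine ⟨max n1 n2, fun x hx => ?_⟩
    rcases List.mem_cons.mp hx with rfl | hx
    · exact hn1.trans_le (hm (le_max_left _ _))
    · exact (hn2 x hx).trans_le (hm (le_max_right _ _))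

lemma isClub_Ioo {β : Ordinal} (hβ : β < omega1) : IsClubOmega1 (Set.Ioo β omega1) := by
  refine ⟨fun x hx => hx.2, ?_, ?_⟩
  · intro α hα
    have h1 : max α β < max α β + 1 := by
      rw [Ordinal.add_one_eq_succ]; exact Order.lt_succ _
    exact ⟨max α β + 1, ⟨(le_max_right α β).trans_lt h1, add_one_lt_omega1 (max_lt hα hβ)⟩,
      (le_max_left α β).trans_lt h1⟩
  · intro δ hδ hδ0 happ
    obtain ⟨γ, hγ, _, hγδ⟩ := happ 0 hδ0
    exact ⟨hγ.1.trans hγδ, hδ⟩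


/-- The club shooting forcing for a stationary `R ⊆ ω₁` is `ω`-distributive: for every
condition `p` and every `P_R`-name `ẋ` for an element of `2^ω` (presented by the open
sets `ν n b` of conditions forcing `ẋ(n) = b`, which are dense-below and consistent),
there are `q ≤ p` and a ground-model real `x` with `q ⊩ ẋ = x̌`. -/
theorem stmt15 (R : Set Ordinal) (hRsub : R ⊆ Set.Iio omega1)
    (hstat : IsStationaryOmega1 R)
    (ν : ℕ → Bool → Set (Set Ordinal))
    (hcond : ∀ n b, ∀ c ∈ ν n b, IsCond R c)
    (hopen : ∀ n b, ∀ c ∈ ν n b, ∀ d, IsCond R d → CondLe d c → d ∈ ν n b)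
    (hdense : ∀ n, ∀ c, IsCond R c →
      ∃ d, IsCond R d ∧ CondLe d c ∧ (d ∈ ν n true ∨ d ∈ ν n false))
    (hcons : ∀ n, ∀ c ∈ ν n true, ∀ d ∈ ν n false,
      ¬ ∃ e, IsCond R e ∧ CondLe e c ∧ CondLe e d) :
    ∀ p, IsCond R p → ∃ q, IsCond R q ∧ CondLe q p ∧
      ∃ x : ℕ → Bool, ∀ n, q ∈ ν n (x n) := by
  intro p hp
  classical
  set D := Dfun R ν hdense with hD
  have hDspec : ∀ {c : Set Ordinal}, IsCond R c → ∀ n : ℕ,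
      IsCond R (D c n) ∧ CondLe (D c n) c ∧ (D c n ∈ ν n true ∨ D c n ∈ ν n false) :=
    fun h n => Dfun_spec R ν hdense h n
  have hB : ∀ l, Bfn D p l < omega1 := fun _ => bnd_lt_omega1 _
  -- R is unbounded in ω₁
  have hRunb : ∀ β < omega1, ∃ γ ∈ R, β < γ ∧ γ < omega1 := by
    intro β hβ
    obtain ⟨γ, hγR, hγI⟩ := hstat.2 _ (isClub_Ioo hβ)
    exact ⟨γ, hγR, hγI.1, hγI.2⟩
  -- a step function for the club construction
  have key : ∀ β : Ordinal, ∃ η : Ordinal, β < omega1 →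
      η < omega1 ∧ β < η ∧ (∃ γ ∈ R, β < γ ∧ γ < η) ∧
      (∀ l : List Ordinal, (∀ x ∈ l, x < β) → Bfn D p l < η) := by
    intro β
    by_cases hβ : β < omega1
    · obtain ⟨γ, hγR, hβγ, hγω⟩ := hRunb β hβ
      obtain ⟨b, hbω, hbl⟩ := listSup_lt hB hβ
      have h1 : max γ b < max γ b + 1 := by
        rw [Ordinal.add_one_eq_succ]; exact Order.lt_succ _
      refine ⟨max γ b + 1, fun _ => ⟨add_one_lt_omega1 (max_lt hγω hbω),
        hβγ.trans_le ((le_max_left γ b).trans h1.le), ⟨γ, hγR, hβγ,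
        (le_max_left γ b).trans_lt h1⟩, fun l hl => (hbl l hl).trans_lt
        ((le_max_right γ b).trans_lt h1)⟩⟩
    · exact ⟨0, fun h => absurd h hβ⟩
  choose F hF using key
  -- the club of closure points
  set C : Set Ordinal := {δ | δ < omega1 ∧ (∀ x ∈ p, x < δ) ∧
      (∀ β < δ, ∃ γ ∈ R, β < γ ∧ γ < δ) ∧
      (∀ l : List Ordinal, (∀ x ∈ l, x < δ) → Bfn D p l < δ)} with hC
  have hclub : IsClubOmega1 C := by
    refine ⟨fun δ hδ => hδ.1, ?_, ?_⟩
    · -- unboundedness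
      intro α hα
      set a : ℕ → Ordinal := fun n => Nat.rec (max α (bnd p) + 1) (fun _ x => F x) n with ha
      have ha0 : a 0 = max α (bnd p) + 1 := rfl
      have haS : ∀ n, a (n+1) = F (a n) := fun n => rfl
      have halt : ∀ n, a n < omega1 := by
        intro n
        induction n with
        | zero => exact add_one_lt_omega1 (max_lt hα (bnd_lt_omega1 p))
        | succ n ih => rw [haS]; exact (hF (a n) ih).1
      have hamono : Monotone a := monotone_nat_of_le_succ fun n =>
        ((haS n) ▸ (hF (a n) (halt n)).2.1).le
      have hδω : iSup a < omega1 := iSup_nat_lt_omega1 a halt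
      have hle : ∀ n, a n ≤ iSup a := Ordinal.le_iSup a
      have hltn : ∀ β, β < iSup a → ∃ n, β < a n := by
        intro β hβ
        by_contra h
        push_neg at h
        exact absurd (Ordinal.iSup_le h) (not_le.mpr hβ)
      have ha0' : max α (bnd p) < a 0 := by
        rw [ha0, Ordinal.add_one_eq_succ]; exact Order.lt_succ _
      refine ⟨iSup a, ⟨hδω, ?_, ?_, ?_⟩, ?_⟩
      · intro x hx
        exact (((bnd_spec hp.2.2.1 x hx).trans (le_max_right α _)).trans_lt ha0').trans_le (hle 0)
      · intro β hβ
        obtain ⟨n, hn⟩ := hltn β hβ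
        obtain ⟨γ, hγR, h1, h2⟩ := (hF (a n) (halt n)).2.2.1
        exact ⟨γ, hγR, hn.trans h1, h2.trans_le ((haS n) ▸ hle (n+1))⟩
      · intro l hl
        obtain ⟨n, hn⟩ := list_bound hamono l fun x hx => hltn x (hl x hx)
        exact ((hF (a n) (halt n)).2.2.2 l hn).trans_le ((haS n) ▸ hle (n+1))
      · exact ((le_max_left α _).trans_lt ha0').trans_le (hle 0)
    · -- closedness
      intro δ hδω hδ0 happ
      refine ⟨hδω, ?_, ?_, ?_⟩
      · intro x hx
        obtain ⟨δ', hδ', _, h2⟩ := happ 0 hδ0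
        exact (hδ'.2.1 x hx).trans h2
      · intro β hβ
        obtain ⟨δ', hδ', h1, h2⟩ := happ β hβ
        obtain ⟨γ, hγR, hg1, hg2⟩ := hδ'.2.2.1 β h1
        exact ⟨γ, hγR, hg1, hg2.trans h2⟩
      · intro l hl
        obtain ⟨δ', hδ', h1, h2⟩ := happ (l.foldr max 0) (foldr_max_lt l hδ0 hl)
        exact (hδ'.2.2.2 l fun x hx => (foldr_max_le l x hx).trans_lt h1).trans h2
  obtain ⟨δ, hδR, hδC⟩ := hstat.2 C hclub
  have hδω : δ < omega1 := hδC.1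
  have hδp : ∀ x ∈ p, x < δ := hδC.2.1
  have hδRu : ∀ β < δ, ∃ γ ∈ R, β < γ ∧ γ < δ := hδC.2.2.1
  have hδB : ∀ l : List Ordinal, (∀ x ∈ l, x < δ) → Bfn D p l < δ := hδC.2.2.2
  have hδ0 : 0 < δ := by
    obtain ⟨x, hx⟩ := hp.2.1
    exact (zero_le (a := x)).trans_lt (hδp x hx)
  -- a surjection onto Iio δ
  have hcnt : Countable (Set.Iio δ) := (countable_Iio_omega1 hδω).to_subtype
  have hne : Nonempty (Set.Iio δ) := ⟨⟨0, hδ0⟩⟩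
  obtain ⟨s, hs⟩ := exists_surjective_nat (Set.Iio δ)
  have he1 : ∀ n, (s n).1 < δ := fun n => (s n).2
  have he2 : ∀ β, β < δ → ∃ n, (s n).1 = β := by
    intro β hβ
    obtain ⟨n, hn⟩ := hs ⟨β, hβ⟩
    exact ⟨n, congrArg Subtype.val hn⟩
  -- next point of R below δ
  have hnx0 : ∀ β : Ordinal, ∃ γ : Ordinal, β < δ → γ ∈ R ∧ β < γ ∧ γ < δ := by
    intro β
    by_cases hβ : β < δ
    · obtain ⟨γ, h1, h2, h3⟩ := hδRu β hβ
      exact ⟨γ, fun _ => ⟨h1, h2, h3⟩⟩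
    · exact ⟨0, fun h => absurd h hβ⟩
  choose nx hnx using hnx0
  -- the recursive construction
  let L : ℕ → List Ordinal := fun n =>
    Nat.rec [] (fun n ln => nx (max (Bfn D p ln) (s n).1) :: ln) n
  let t : ℕ → Set Ordinal := fun n => build D p (L n)
  let g : ℕ → Ordinal := fun n => nx (max (Bfn D p (L n)) (s n).1)
  have hL0 : L 0 = [] := rfl
  have hLS : ∀ n, L (n+1) = g n :: L n := fun n => rfl
  have hlen : ∀ n, (L n).length = n := by
    intro n
    induction n with
    | zero => rfl
    | succ n ih => rw [hLS]; simp [ih]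
  have ht0 : t 0 = p := rfl
  have htS : ∀ n, t (n+1) = insert (g n) (D (t n) n) := by
    intro n
    show build D p (L (n+1)) = _
    rw [hLS]
    show insert (g n) (D (build D p (L n)) (L n).length) = _
    rw [hlen]
  have hBfn : ∀ n, Bfn D p (L n) = bnd (D (t n) n) := by
    intro n
    rw [Bfn, hlen]
  -- main invariant
  have main : ∀ n, (∀ x ∈ L n, x < δ) ∧ IsCond R (t n) ∧ (∀ x ∈ t n, x < δ) := by
    intro n
    induction n with
    | zero => exact ⟨by simp [hL0], hp, hδp⟩
    | succ n ih =>
      obtain ⟨ihL, ihc, ihδ⟩ := ih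
      have hmax : max (Bfn D p (L n)) (s n).1 < δ := max_lt (hδB (L n) ihL) (he1 n)
      obtain ⟨hgR, hgx, hgδ⟩ := hnx _ hmax
      have hDc := hDspec ihc n
      have hDb : ∀ x ∈ D (t n) n, x ≤ Bfn D p (L n) := by
        rw [hBfn]
        exact bnd_spec hDc.1.2.2.1
      have hDg : ∀ x ∈ D (t n) n, x < g n := fun x hx =>
        (hDb x hx).trans_lt ((le_max_left _ _).trans_lt hgx)
      have hins := isCond_insert hDc.1 hgR (hgδ.trans hδω) hDg
      refine ⟨?_, ?_, ?_⟩
      · intro x hx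
        rw [hLS] at hx
        rcases List.mem_cons.mp hx with rfl | hx
        · exact hgδ
        · exact ihL x hx
      · rw [htS]; exact hins.1
      · intro x hx
        rw [htS] at hx
        rcases Set.mem_insert_iff.mp hx with rfl | hx
        · exact hgδ
        · exact (hDb x hx).trans_lt ((le_max_left _ _).trans_lt hmax)
  -- step details
  have detail : ∀ n, (∀ x ∈ D (t n) n, x < g n) ∧ g n ∈ R ∧ (s n).1 < g n ∧ g n < δ ∧
      CondLe (t (n+1)) (D (t n) n) ∧ CondLe (t (n+1)) (t n) := by
    intro n
    obtain ⟨ihL, ihc, ihδ⟩ := main n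
    have hmax : max (Bfn D p (L n)) (s n).1 < δ := max_lt (hδB (L n) ihL) (he1 n)
    obtain ⟨hgR, hgx, hgδ⟩ := hnx _ hmax
    have hDc := hDspec ihc n
    have hDb : ∀ x ∈ D (t n) n, x ≤ Bfn D p (L n) := by
      rw [hBfn]
      exact bnd_spec hDc.1.2.2.1
    have hDg : ∀ x ∈ D (t n) n, x < g n := fun x hx =>
      (hDb x hx).trans_lt ((le_max_left _ _).trans_lt hgx)
    have hins := isCond_insert hDc.1 hgR (hgδ.trans hδω) hDg
    have h1 : CondLe (t (n+1)) (D (t n) n) := htS n ▸ hins.2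
    exact ⟨hDg, hgR, (le_max_right _ _).trans_lt hgx, hgδ, h1,
      condLe_trans h1 hDc.2.1⟩
  -- monotonicity of the chain
  have hmono : ∀ n m, n ≤ m → CondLe (t m) (t n) := by
    intro n m h
    induction h with
    | refl => exact condLe_refl _
    | step h ih => exact condLe_trans (detail _).2.2.2.2.2 ih
  have hgmem : ∀ n, g n ∈ t (n+1) := by
    intro n
    rw [htS]
    exact Set.mem_insert _ _
  -- the generic condition
  set q : Set Ordinal := insert δ (⋃ n, t n) with hq
  have hsubq : ∀ n, t n ⊆ q := fun n x hx =>
    Set.mem_insert_of_mem _ (Set.mem_iUnion.mpr ⟨n, hx⟩)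
  have hqδ : ∀ x ∈ q, x ≤ δ := by
    intro x hx
    rcases Set.mem_insert_iff.mp hx with rfl | hx
    · exact le_rfl
    · obtain ⟨n, hn⟩ := Set.mem_iUnion.mp hx
      exact ((main n).2.2 x hn).le
  have hqLe : ∀ n, CondLe q (t n) := by
    intro n
    refine ⟨hsubq n, fun x hx hxn y hy => ?_⟩
    rcases Set.mem_insert_iff.mp hx with rfl | hx
    · exact (main n).2.2 y hy
    · obtain ⟨m, hm⟩ := Set.mem_iUnion.mp hx
      rcases le_or_gt m n with h | h
      · exact absurd ((hmono m n h).1 hm) hxn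
      · exact (hmono n m h.le).2 x hm hxn y hy
  have hqD : ∀ n, CondLe q (D (t n) n) := by
    intro n
    have hDt : D (t n) n ⊆ t (n+1) := (detail n).2.2.2.2.1.1
    refine ⟨fun y hy => hsubq (n+1) (hDt hy), fun x hx hxD y hy => ?_⟩
    by_cases hxt : x ∈ t (n+1)
    · exact (detail n).2.2.2.2.1.2 x hxt hxD y hy
    · exact (hqLe (n+1)).2 x hx hxt y (hDt hy)
  -- q is a condition
  have hqcond : IsCond R q := by
    refine ⟨?_, ⟨δ, Set.mem_insert _ _⟩, ⟨δ, hδω, hqδ⟩, ?_⟩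
    · intro x hx
      rcases Set.mem_insert_iff.mp hx with rfl | hx
      · exact hδR
      · obtain ⟨n, hn⟩ := Set.mem_iUnion.mp hx
        exact (main n).2.1.1 hn
    · intro δ' h0 happ
      rcases lt_trichotomy δ' δ with hlt | rfl | hgt
      · obtain ⟨n, hn⟩ := he2 δ' hlt
        have hδ'g : δ' < g n := hn ▸ (detail n).2.2.1
        have hsubN : ∀ x ∈ q, x < δ' → x ∈ t (n+1) := by
          intro x hx hxδ'
          rcases Set.mem_insert_iff.mp hx with rfl | hx
          · exact absurd hxδ' (not_lt.mpr hlt.le)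
          · obtain ⟨m, hm⟩ := Set.mem_iUnion.mp hx
            rcases le_or_gt m (n+1) with h | h
            · exact (hmono m (n+1) h).1 hm
            · by_contra hxN
              have := (hmono (n+1) m h.le).2 x hm hxN (g n) (hgmem n)
              exact absurd (hxδ'.trans hδ'g) (not_lt.mpr this.le)
        have : δ' ∈ t (n+1) := by
          apply (main (n+1)).2.1.2.2.2 δ' h0
          intro β hβ
          obtain ⟨γ, hγ, h1, h2⟩ := happ β hβ
          exact ⟨γ, hsubN γ hγ h2, h1, h2⟩
        exact hsubq (n+1) this
      · exact Set.mem_insert _ _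
      · obtain ⟨γ, hγ, h1, _⟩ := happ δ hgt
        exact absurd h1 (not_lt.mpr (hqδ γ hγ))
  refine ⟨q, hqcond, ht0 ▸ hqLe 0, fun n => if D (t n) n ∈ ν n true then true else false,
    fun n => ?_⟩
  have hmem : D (t n) n ∈ ν n (if D (t n) n ∈ ν n true then true else false) := by
    rcases (hDspec (main n).2.1 n).2.2 with h | h
    · rwa [if_pos h]
    · by_cases h' : D (t n) n ∈ ν n true
      · rwa [if_pos h']
      · rwa [if_neg h']
  exact hopen n _ _ hmem q hqcond (hqD n)
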